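/- Let γ be a real number with 0 < γ < 1, let K₁, K₂ be natural numbers with 1 ≤ K₁ < K₂, and let r₁, r₂ : ℕ → ℝ satisfy r_min ≤ r₁(k) ≤ r_max and r_min ≤ r₂(k) ≤ r_max for all k, with γ^{K₂−K₁}·r_min ≤ r_max. Define Q₁ = γ^{K₁−1}·R + Σ_{k=0}^{K₁−2} γ^k r₁(k+1) and Q₂ = γ^{K₂−1} + Σ_{k=0}^{K₂−2} γ^k r₂(k+1). If R < γ^{K₂−K₁} − (γ^{1−K₁}/(1 − γ))·(r_max − r_min), where γ^{1−K₁} denotes γ raised to the integer power 1 − K₁, then Q₁ < Q₂. -/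

import Mathlib

open Finset in
/-- the tightened sufficient condition on R still gives Q₁ < Q₂. -/
theorem tightened_reward_bound_implies_optimality (γ : ℝ) (hγ0 : 0 < γ) (hγ1 : γ < 1)
    (K₁ K₂ : ℕ) (hK₁ : 1 ≤ K₁) (hK : K₁ < K₂)
    (rmin rmax : ℝ) (R : ℝ) (r₁ r₂ : ℕ → ℝ)
    (hr₁ : ∀ k, rmin ≤ r₁ k ∧ r₁ k ≤ rmax)
    (hr₂ : ∀ k, rmin ≤ r₂ k ∧ r₂ k ≤ rmax)
    (hmm : γ ^ (K₂ - K₁) * rmin ≤ rmax)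
    (hR : R < γ ^ (K₂ - K₁) - (γ ^ ((1 : ℤ) - (K₁ : ℤ)) / (1 - γ)) * (rmax - rmin)) :
    γ ^ (K₁ - 1) * R + ∑ k ∈ range (K₁ - 1), γ ^ k * r₁ (k + 1) <
      γ ^ (K₂ - 1) + ∑ k ∈ range (K₂ - 1), γ ^ k * r₂ (k + 1) := by
  have hγne : γ ≠ 0 := ne_of_gt hγ0
  have hγ1' : (1 : ℝ) - γ > 0 := by linarith
  have hpos1 : (0:ℝ) < γ ^ (K₁ - 1) := pow_pos hγ0 _
  -- sum bounds
  have hsum1 : ∑ k ∈ range (K₁ - 1), γ ^ k * r₁ (k + 1) ≤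
      (∑ k ∈ range (K₁ - 1), γ ^ k) * rmax := by
    rw [Finset.sum_mul]
    refine Finset.sum_le_sum fun k _ => ?_
    exact mul_le_mul_of_nonneg_left (hr₁ (k+1)).2 (le_of_lt (pow_pos hγ0 k))
  have hsum2 : (∑ k ∈ range (K₂ - 1), γ ^ k) * rmin ≤
      ∑ k ∈ range (K₂ - 1), γ ^ k * r₂ (k + 1) := by
    rw [Finset.sum_mul]
    refine Finset.sum_le_sum fun k _ => ?_
    exact mul_le_mul_of_nonneg_left (hr₂ (k+1)).1 (le_of_lt (pow_pos hγ0 k))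
  -- geometric sums
  have hg1 : ∑ k ∈ range (K₁ - 1), γ ^ k = (1 - γ ^ (K₁ - 1)) / (1 - γ) := by
    rw [geom_sum_eq (ne_of_lt hγ1), div_eq_div_iff (by linarith) (by linarith : (1:ℝ) - γ ≠ 0)]
    ring
  have hg2 : ∑ k ∈ range (K₂ - 1), γ ^ k = (1 - γ ^ (K₂ - 1)) / (1 - γ) := by
    rw [geom_sum_eq (ne_of_lt hγ1), div_eq_div_iff (by linarith) (by linarith : (1:ℝ) - γ ≠ 0)]
    ring
  -- zpow identity: γ^(K₁-1) * γ^(1-K₁) = 1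
  have hzpow : γ ^ (K₁ - 1) * γ ^ ((1 : ℤ) - (K₁ : ℤ)) = 1 := by
    have : γ ^ (K₁ - 1) = γ ^ ((K₁ : ℤ) - 1) := by
      rw [← zpow_natCast]
      congr 1
      omega
    rw [this, ← zpow_add₀ hγne]
    norm_num
  -- pow identity: γ^(K₁-1) * γ^(K₂-K₁) = γ^(K₂-1)
  have hpow : γ ^ (K₁ - 1) * γ ^ (K₂ - K₁) = γ ^ (K₂ - 1) := by
    rw [← pow_add]
    congr 1
    omega
  have hmm' : γ ^ (K₂ - 1) * rmin ≤ γ ^ (K₁ - 1) * rmax := by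
    have := mul_le_mul_of_nonneg_left hmm (le_of_lt hpos1)
    calc γ ^ (K₂ - 1) * rmin = γ ^ (K₁ - 1) * (γ ^ (K₂ - K₁) * rmin) := by
          rw [← mul_assoc, hpow]
      _ ≤ γ ^ (K₁ - 1) * rmax := this
  -- multiply hR by γ^(K₁-1)
  have hRm : γ ^ (K₁ - 1) * R <
      γ ^ (K₂ - 1) - (rmax - rmin) / (1 - γ) := by
    have h := mul_lt_mul_of_pos_left hR hpos1
    have key : γ ^ (K₁ - 1) * (γ ^ ((1 : ℤ) - (K₁ : ℤ)) / (1 - γ) * (rmax - rmin))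
        = (rmax - rmin) / (1 - γ) := by
      field_simp
      calc γ ^ (K₁ - 1) * γ ^ ((1 : ℤ) - (K₁ : ℤ)) * (rmax - rmin)
          = (γ ^ (K₁ - 1) * γ ^ ((1 : ℤ) - (K₁ : ℤ))) * (rmax - rmin) := by ring
        _ = rmax - rmin := by rw [hzpow]; ring
    calc γ ^ (K₁ - 1) * R
        < γ ^ (K₁ - 1) * (γ ^ (K₂ - K₁) - γ ^ ((1 : ℤ) - (K₁ : ℤ)) / (1 - γ) * (rmax - rmin)) := h
      _ = γ ^ (K₂ - 1) - (rmax - rmin) / (1 - γ) := by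
          rw [mul_sub, hpow, key]
  -- final: combine
  rw [hg1] at hsum1
  rw [hg2] at hsum2
  have hfinal : (1 - γ ^ (K₁ - 1)) / (1 - γ) * rmax - (rmax - rmin) / (1 - γ)
      ≤ (1 - γ ^ (K₂ - 1)) / (1 - γ) * rmin := by
    rw [div_mul_eq_mul_div, div_mul_eq_mul_div, div_sub_div_same, div_le_div_iff₀ hγ1' hγ1']
    nlinarith [hmm']
  linarith
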